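/- Let (β₁,...,β_{2^L}) be a Cantor basis of GF(2^{2^L}) with subspaces W_i = span(β₁,...,β_i), and let ϖ_n denote the n-th element in the induced lexicographic enumeration. Let 1 < m ≤ 2^L, l = ⌈log₂ m⌉, a ∈ W_{2^L} \ W_m, and b = a^{2^{2^{l-1}}} - a. Let f be a polynomial over GF(2^{2^L}) of degree < 2^m. For 0 ≤ i < 2^{2^{l-1}} and 0 ≤ j < 2^{m - 2^{l-1}}, let a_j = a + ϖ_{j·2^{2^{l-1}}} and let r_j be the remainder of f modulo x^{2^{2^{l-1}}} - x - (b + ϖ_j). Then f(a + ϖ_{i + j·2^{2^{l-1}}}) = r_j(a_j + ϖ_i). -/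

import Mathlib

open Polynomial

section Aux

variable {L : ℕ}

/-- One-indexed basis extended by zero: `Bf bβ t = β_t` for `1 ≤ t ≤ 2^L`, else `0`. -/
noncomputable def Bf (bβ : Module.Basis (Fin (2 ^ L)) (ZMod 2) (GaloisField 2 (2 ^ L))) :
    ℕ → GaloisField 2 (2 ^ L) :=
  fun t => if h : 0 < t ∧ t ≤ 2 ^ L then bβ ⟨t - 1, by omega⟩ else 0

variable (bβ : Module.Basis (Fin (2 ^ L)) (ZMod 2) (GaloisField 2 (2 ^ L)))

lemma Bf_coe (t : Fin (2 ^ L)) : Bf bβ ((t : ℕ) + 1) = bβ t := by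
  have h : 0 < (t : ℕ) + 1 ∧ (t : ℕ) + 1 ≤ 2 ^ L := ⟨Nat.succ_pos _, t.isLt⟩
  simp only [Bf, dif_pos h, Nat.add_sub_cancel, Fin.eta]

lemma Bf_zero : Bf bβ 0 = 0 := by simp [Bf]

lemma Bf_sq (hL : 0 < L) (hb1 : bβ ⟨0, Nat.two_pow_pos L⟩ = 1)
    (hbc : ∀ i : ℕ, ∀ h : i + 1 < 2 ^ L,
      (bβ ⟨i + 1, h⟩) ^ 2 - bβ ⟨i + 1, h⟩ = bβ ⟨i, Nat.lt_of_succ_lt h⟩) :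
    ∀ t ≤ 2 ^ L, (Bf bβ t) ^ 2 = Bf bβ t + Bf bβ (t - 1) := by
  intro t ht
  match t with
  | 0 => simp [Bf]
  | 1 =>
    have h : 0 < 1 ∧ 1 ≤ 2 ^ L := ⟨one_pos, Nat.one_le_two_pow⟩
    simp only [Bf, dif_pos h]
    norm_num
    rw [show (0 : Fin (2 ^ L)) = ⟨0, by positivity⟩ from rfl, hb1]
    norm_num
  | (u + 2) =>
    have h : 0 < u + 2 ∧ u + 2 ≤ 2 ^ L := ⟨by omega, ht⟩
    have h' : 0 < u + 1 ∧ u + 1 ≤ 2 ^ L := ⟨by omega, by omega⟩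
    have hu : u + 1 < 2 ^ L := by omega
    simp only [Bf, dif_pos h, show u + 2 - 1 = u + 1 from rfl,
      show u + 2 - 1 - 1 = u from rfl, dif_pos h', Nat.add_sub_cancel]
    have := hbc u hu
    rw [sub_eq_iff_eq_add] at this
    rw [this, add_comm]

lemma Bf_pow (hL : 0 < L) (hb1 : bβ ⟨0, Nat.two_pow_pos L⟩ = 1)
    (hbc : ∀ i : ℕ, ∀ h : i + 1 < 2 ^ L,
      (bβ ⟨i + 1, h⟩) ^ 2 - bβ ⟨i + 1, h⟩ = bβ ⟨i, Nat.lt_of_succ_lt h⟩) :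
    ∀ k : ℕ, ∀ t ≤ 2 ^ L, (Bf bβ t) ^ (2 ^ 2 ^ k) = Bf bβ t + Bf bβ (t - 2 ^ k) := by
  have hchar : ∀ x : GaloisField 2 (2 ^ L), x + x = 0 := fun x => CharTwo.add_self_eq_zero x
  intro k
  induction k with
  | zero =>
    intro t ht
    simpa using Bf_sq bβ hL hb1 hbc t ht
  | succ k ih =>
    intro t ht
    have hE : (2 : ℕ) ^ 2 ^ (k + 1) = 2 ^ 2 ^ k * 2 ^ 2 ^ k := by
      rw [← pow_add]
      congr 1
      omega
    rw [hE, pow_mul, ih t ht, add_pow_char_pow, ih t ht,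
      ih (t - 2 ^ k) (le_trans (Nat.sub_le _ _) ht)]
    have h1 : t - 2 ^ k - 2 ^ k = t - 2 ^ (k + 1) := by
      have : (2 : ℕ) ^ (k + 1) = 2 ^ k + 2 ^ k := by omega
      omega
    rw [h1]
    have := hchar (Bf bβ (t - 2 ^ k))
    -- x + y + (y + z) = x + z
    rw [← add_assoc, add_assoc (Bf bβ t) (Bf bβ (t - 2 ^ k)) (Bf bβ (t - 2 ^ k)), this,
      add_zero]

variable (ϖ : ℕ → GaloisField 2 (2 ^ L))
variable (hϖ : ∀ n, ϖ n = ∑ t : Fin (2 ^ L), if n.testBit (t : ℕ) then bβ t else 0)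

include hϖ in
lemma omega_range (n : ℕ) :
    ϖ n = ∑ t ∈ Finset.range (2 ^ L), if n.testBit t then Bf bβ (t + 1) else 0 := by
  rw [hϖ, ← Fin.sum_univ_eq_sum_range (fun t => if n.testBit t then Bf bβ (t + 1) else 0)]
  refine Finset.sum_congr rfl fun t _ => ?_
  rw [Bf_coe]

include hϖ in
lemma omega_pow (hL : 0 < L) (hb1 : bβ ⟨0, Nat.two_pow_pos L⟩ = 1)
    (hbc : ∀ i : ℕ, ∀ h : i + 1 < 2 ^ L,
      (bβ ⟨i + 1, h⟩) ^ 2 - bβ ⟨i + 1, h⟩ = bβ ⟨i, Nat.lt_of_succ_lt h⟩)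
    (k : ℕ) (hk : 2 ^ k ≤ 2 ^ L) (n : ℕ) (hn : n < 2 ^ 2 ^ L) :
    (ϖ n) ^ (2 ^ 2 ^ k) = ϖ n + ϖ (n / 2 ^ 2 ^ k) := by
  have hchar : ∀ x : GaloisField 2 (2 ^ L), x + x = 0 := fun x => CharTwo.add_self_eq_zero x
  set s : ℕ := 2 ^ k with hs
  rw [omega_range bβ ϖ hϖ n, omega_range bβ ϖ hϖ (n / 2 ^ s)]
  -- distribute the Frobenius power over the sum
  have hfrob : (∑ t ∈ Finset.range (2 ^ L), if n.testBit t then Bf bβ (t + 1) else 0) ^ 2 ^ s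
      = ∑ t ∈ Finset.range (2 ^ L), (if n.testBit t then Bf bβ (t + 1) else 0) ^ 2 ^ s := by
    rw [← iterateFrobenius_def (R := GaloisField 2 (2 ^ L)) (p := 2), map_sum]
    simp only [iterateFrobenius_def]
  rw [hfrob]
  have hterm : ∀ t ∈ Finset.range (2 ^ L),
      (if n.testBit t then Bf bβ (t + 1) else 0) ^ 2 ^ s
        = (if n.testBit t then Bf bβ (t + 1) else 0)
          + (if n.testBit t then Bf bβ (t + 1 - s) else 0) := by
    intro t htmem
    rw [Finset.mem_range] at htmem
    by_cases hc : n.testBit t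
    · simp only [hc, if_true]
      exact Bf_pow bβ hL hb1 hbc k (t + 1) (by omega)
    · simp [hc]
  rw [Finset.sum_congr rfl hterm, Finset.sum_add_distrib]
  congr 1
  -- shifted sum equals the ϖ of the shifted index
  have hdivbit : ∀ t : ℕ, (n / 2 ^ s).testBit t = n.testBit (s + t) := by
    intro t
    rw [← Nat.shiftRight_eq_div_pow, Nat.testBit_shiftRight]
  simp only [hdivbit]
  -- LHS : ∑_{t < 2^L} if bit n t then Bf (t+1-s) else 0
  rw [Finset.range_eq_Ico, ← Finset.sum_Ico_consecutive _ (Nat.zero_le s) hk,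
    ← Finset.sum_Ico_consecutive (fun t => if n.testBit (s + t) then Bf bβ (t + 1) else 0)
      (Nat.zero_le (2 ^ L - s)) (Nat.sub_le _ _)]
  have hlow : ∑ t ∈ Finset.Ico 0 s, (if n.testBit t then Bf bβ (t + 1 - s) else 0) = 0 := by
    refine Finset.sum_eq_zero fun t htm => ?_
    rw [Finset.mem_Ico] at htm
    have : t + 1 - s = 0 := by omega
    rw [this, Bf_zero, ite_self]
  have hhigh : ∑ t ∈ Finset.Ico (2 ^ L - s) (2 ^ L),
      (if n.testBit (s + t) then Bf bβ (t + 1) else 0) = 0 := by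
    refine Finset.sum_eq_zero fun t htm => ?_
    rw [Finset.mem_Ico] at htm
    have hge : 2 ^ L ≤ s + t := by omega
    have : n.testBit (s + t) = false :=
      Nat.testBit_lt_two_pow (lt_of_lt_of_le hn (Nat.pow_le_pow_right (by norm_num) hge))
    simp [this]
  rw [hlow, hhigh, zero_add, add_zero, Finset.sum_Ico_eq_sum_range, ← Finset.range_eq_Ico]
  refine Finset.sum_congr rfl fun t _ => ?_
  have : s + t + 1 - s = t + 1 := by omega
  rw [this]

include hϖ in
lemma omega_add (s i j : ℕ) (hi : i < 2 ^ s) :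
    ϖ (i + j * 2 ^ s) = ϖ i + ϖ (j * 2 ^ s) := by
  rw [omega_range bβ ϖ hϖ (i + j * 2 ^ s), omega_range bβ ϖ hϖ i,
    omega_range bβ ϖ hϖ (j * 2 ^ s), ← Finset.sum_add_distrib]
  refine Finset.sum_congr rfl fun t _ => ?_
  have h1 : i + j * 2 ^ s = 2 ^ s * j + i := by ring
  have h2 : j * 2 ^ s = 2 ^ s * j := by ring
  rw [h1, h2, Nat.testBit_two_pow_mul_add j hi t, Nat.testBit_two_pow_mul]
  by_cases hts : t < s
  · have hfalse : ¬ s ≤ t := by omega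
    simp [hts, hfalse]
  · have hi' : i.testBit t = false :=
      Nat.testBit_lt_two_pow (lt_of_lt_of_le hi (Nat.pow_le_pow_right (by norm_num) (by omega)))
    have hst : s ≤ t := by omega
    simp [hts, hi', hst]

end Aux

/-- Evaluation mechanism: with a Cantor basis of `GF(2^(2^L))`, subspaces `W`,
and enumeration `ϖ`, let `1 < m ≤ 2^L`, `l = ⌈log₂ m⌉`, `a ∉ W m`,
`b = a^(2^(2^(l-1))) - a`, and `f` of degree `< 2^m`.  For
`i < 2^(2^(l-1))` and `j < 2^(m - 2^(l-1))`, with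
`aⱼ = a + ϖ_{j·2^(2^(l-1))}` and `rⱼ` the remainder of `f` modulo
`x^(2^(2^(l-1))) - x - (b + ϖⱼ)`, one has
`f(a + ϖ_{i + j·2^(2^(l-1))}) = rⱼ(aⱼ + ϖᵢ)`. -/
theorem evaluation_mechanism (L : ℕ) (hL : 0 < L)
    (bβ : Module.Basis (Fin (2 ^ L)) (ZMod 2) (GaloisField 2 (2 ^ L)))
    (hb1 : bβ ⟨0, by positivity⟩ = 1)
    (hbc : ∀ i : ℕ, ∀ h : i + 1 < 2 ^ L,
      (bβ ⟨i + 1, h⟩) ^ 2 - bβ ⟨i + 1, h⟩ = bβ ⟨i, by omega⟩)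
    (ϖ : ℕ → GaloisField 2 (2 ^ L))
    (hϖ : ∀ n, ϖ n = ∑ t : Fin (2 ^ L), if n.testBit (t : ℕ) then bβ t else 0)
    (m l : ℕ) (hm1 : 1 < m) (hm2 : m ≤ 2 ^ L) (hl : l = Nat.clog 2 m)
    (a : GaloisField 2 (2 ^ L))
    (ha : a ∉ Submodule.span (ZMod 2) (bβ '' {t : Fin (2 ^ L) | (t : ℕ) < m}))
    (b : GaloisField 2 (2 ^ L)) (hb : b = a ^ (2 ^ (2 ^ (l - 1))) - a)
    (f : Polynomial (GaloisField 2 (2 ^ L)))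
    (hf : f.degree < ((2 ^ m : ℕ) : WithBot ℕ))
    (i j : ℕ) (hi : i < 2 ^ (2 ^ (l - 1))) (hj : j < 2 ^ (m - 2 ^ (l - 1)))
    (aj : GaloisField 2 (2 ^ L)) (haj : aj = a + ϖ (j * 2 ^ (2 ^ (l - 1))))
    (r : Polynomial (GaloisField 2 (2 ^ L)))
    (hr : r = f %ₘ (X ^ (2 ^ (2 ^ (l - 1))) - X - C (b + ϖ j))) :
    f.eval (a + ϖ (i + j * 2 ^ (2 ^ (l - 1)))) = r.eval (aj + ϖ i) := by
  set s : ℕ := 2 ^ (l - 1) with hsdef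
  -- basic numerology
  have hsm : s < m := by
    rw [hsdef, hl]
    exact Nat.pow_pred_clog_lt_self (by norm_num) hm1
  have hsL : s ≤ 2 ^ L := le_trans (le_of_lt hsm) hm2
  set n : ℕ := i + j * 2 ^ s with hndef
  have hn2m : n < 2 ^ m := by
    have h1 : n < (j + 1) * 2 ^ s := by
      rw [hndef]
      have : (j + 1) * 2 ^ s = j * 2 ^ s + 2 ^ s := by ring
      omega
    have h2 : (j + 1) * 2 ^ s ≤ 2 ^ (m - s) * 2 ^ s := Nat.mul_le_mul_right _ (by omega)
    have h3 : (2 : ℕ) ^ (m - s) * 2 ^ s = 2 ^ m := by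
      rw [← pow_add]
      congr 1
      omega
    omega
  have hn : n < 2 ^ 2 ^ L :=
    lt_of_lt_of_le hn2m (Nat.pow_le_pow_right (by norm_num) hm2)
  -- the two evaluation points coincide
  have hpoint : a + ϖ n = aj + ϖ i := by
    rw [omega_add bβ ϖ hϖ s i j hi, haj]
    ring
  -- the modulus vanishes at the point
  set α : GaloisField 2 (2 ^ L) := a + ϖ n with hα
  have hdiv : n / 2 ^ s = j := by
    rw [hndef, Nat.add_mul_div_right _ _ (Nat.two_pow_pos s), Nat.div_eq_of_lt hi, zero_add]
  have hαpow : α ^ 2 ^ s = α + (b + ϖ j) := by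
    rw [hα, add_pow_char_pow, omega_pow bβ ϖ hϖ hL hb1 hbc (l - 1) hsL n hn, hdiv]
    have hab : a ^ 2 ^ s = b + a := by
      rw [hb]
      ring
    rw [hab]
    ring
  set g : Polynomial (GaloisField 2 (2 ^ L)) := X ^ 2 ^ s - X - C (b + ϖ j) with hg
  have hmonic : g.Monic := by
    rw [hg, sub_sub]
    apply monic_X_pow_sub
    have h1 : degree (X + C (b + ϖ j) : Polynomial (GaloisField 2 (2 ^ L))) = 1 :=
      degree_X_add_C _
    rw [h1]
    exact_mod_cast Nat.one_lt_two_pow (by positivity)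
  have hg0 : g.eval α = 0 := by
    rw [hg]
    simp only [eval_sub, eval_pow, eval_X, eval_C]
    rw [hαpow]
    ring
  have key := modByMonic_add_div f g
  calc f.eval α = (f %ₘ g + g * (f /ₘ g)).eval α := by rw [key]
    _ = (f %ₘ g).eval α + g.eval α * (f /ₘ g).eval α := by simp [eval_add, eval_mul]
    _ = r.eval α := by rw [hg0, ← hr]; ring
    _ = r.eval (aj + ϖ i) := by rw [← hpoint]
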